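/- arXiv:2405.06554 — 4 statements merged into one kernel-verified Lean document; each statement's English description precedes it below -/
import Mathlib

section
/- Fix real constants L > 0, c₁ > 0, c₂ > 0 and an integer M ≥ 2. For real T > 1 define ε(T) = (log T)^{−1/4}, l(T) = c₁·T^{−1/6}, I(T) = c₂·ε(T), b(T) = ( l(T)³ / (4·(1+l(T))³) )·( I(T)/(4L) )², B(T) = 2 + ( 2·(1+l(T))² / l(T)² )·( 4L/I(T) )², and q(T) = 1 + (1/b(T))·( 1 + log( M·B(T)·(1 + b(T)) ) ). Then q(T)/T → 0 as T → ∞; moreover there exist constants C₀ > 0 and T₀ such that q(T) ≤ C₀·T^{5/6}·(log T)^{1/2} for all T ≥ T₀. -/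
open Filter

set_option maxHeartbeats 1600000

/-- Lemma 2 of the paper: the threshold `q(l, n, I(T))` of the proposed test is sublinear
in `T`; in fact `q(T) ∈ O(T^{5/6} (log T)^{1/2})`. -/
theorem threshold_sublinear (L c₁ c₂ : ℝ) (hL : 0 < L) (hc₁ : 0 < c₁) (hc₂ : 0 < c₂)
    (M : ℕ) (hM : 2 ≤ M)
    (ε l I b B q : ℝ → ℝ)
    (hε : ∀ T > 1, ε T = Real.log T ^ (-(1 : ℝ) / 4))
    (hl : ∀ T > 1, l T = c₁ * T ^ (-(1 : ℝ) / 6))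
    (hI : ∀ T > 1, I T = c₂ * ε T)
    (hb : ∀ T > 1, b T = (l T ^ 3 / (4 * (1 + l T) ^ 3)) * (I T / (4 * L)) ^ 2)
    (hB : ∀ T > 1, B T = 2 + (2 * (1 + l T) ^ 2 / l T ^ 2) * (4 * L / I T) ^ 2)
    (hq : ∀ T > 1, q T = 1 + (1 / b T) * (1 + Real.log ((M : ℝ) * B T * (1 + b T)))) :
    Tendsto (fun T => q T / T) atTop (nhds 0) ∧
      ∃ C₀ > (0 : ℝ), ∃ T₀ : ℝ, ∀ T ≥ T₀,
        q T ≤ C₀ * T ^ ((5 : ℝ) / 6) * Real.log T ^ ((1 : ℝ) / 2) := by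
  obtain ⟨K, hK⟩ : ∃ K : ℝ, K = c₁ ^ 3 * c₂ ^ 2 / (64 * (1 + c₁) ^ 3 * L ^ 2) := ⟨_, rfl⟩
  have hKpos : 0 < K := by rw [hK]; positivity
  obtain ⟨A, hA⟩ : ∃ A : ℝ, A = 32 * (1 + c₁) ^ 2 * L ^ 2 / (c₁ ^ 2 * c₂ ^ 2) := ⟨_, rfl⟩
  have hApos : 0 < A := by rw [hA]; positivity
  obtain ⟨C₀, hC₀⟩ : ∃ C₀ : ℝ, C₀ = 1 + 12 / K := ⟨_, rfl⟩
  have hC₀pos : 0 < C₀ := by rw [hC₀]; positivity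
  -- key eventual bound
  have key : ∀ᶠ T in atTop, 1 ≤ q T ∧
      q T ≤ C₀ * T ^ ((5 : ℝ) / 6) * Real.log T ^ ((1 : ℝ) / 2) := by
    have e1 : ∀ᶠ T : ℝ in atTop, (1:ℝ) < T := eventually_gt_atTop 1
    have e2 : ∀ᶠ T : ℝ in atTop, 1 ≤ Real.log T :=
      Real.tendsto_log_atTop.eventually_ge_atTop 1
    have e3 : ∀ᶠ T : ℝ in atTop, (M:ℝ) ≤ T := eventually_ge_atTop _
    have e4 : ∀ᶠ T : ℝ in atTop, 1 + c₂ ^ 2 / (64 * L ^ 2) ≤ T := eventually_ge_atTop _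
    have e5 : ∀ᶠ T : ℝ in atTop, 6 * A ≤ T ^ ((1:ℝ)/3) :=
      (tendsto_rpow_atTop (by norm_num : (0:ℝ) < 1/3)).eventually_ge_atTop _
    have e6 : ∀ᶠ T : ℝ in atTop, (4:ℝ) ≤ T := eventually_ge_atTop 4
    filter_upwards [e1, e2, e3, e4, e5, e6] with T hT1 hlog1 hMT hbmax hA6 hT4
    have hT0 : (0:ℝ) < T := by linarith
    have hlog0 : (0:ℝ) < Real.log T := by linarith
    obtain ⟨x, hxdef⟩ : ∃ x : ℝ, x = T ^ (-(1:ℝ)/6) := ⟨_, rfl⟩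
    obtain ⟨y, hydef⟩ : ∃ y : ℝ, y = Real.log T ^ (-(1:ℝ)/4) := ⟨_, rfl⟩
    obtain ⟨u, hudef⟩ : ∃ u : ℝ, u = T ^ ((1:ℝ)/2) := ⟨_, rfl⟩
    obtain ⟨v, hvdef⟩ : ∃ v : ℝ, v = Real.log T ^ ((1:ℝ)/2) := ⟨_, rfl⟩
    obtain ⟨w, hwdef⟩ : ∃ w : ℝ, w = T ^ ((1:ℝ)/3) := ⟨_, rfl⟩
    rw [← hwdef] at hA6
    have hx0 : 0 < x := hxdef ▸ Real.rpow_pos_of_pos hT0 _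
    have hy0 : 0 < y := hydef ▸ Real.rpow_pos_of_pos hlog0 _
    have hx1 : x ≤ 1 := hxdef ▸ Real.rpow_le_one_of_one_le_of_nonpos hT1.le (by norm_num)
    have hy1 : y ≤ 1 := hydef ▸ Real.rpow_le_one_of_one_le_of_nonpos hlog1 (by norm_num)
    have hu0 : 0 < u := hudef ▸ Real.rpow_pos_of_pos hT0 _
    have hv0 : 0 < v := hvdef ▸ Real.rpow_pos_of_pos hlog0 _
    have hw0 : 0 < w := hwdef ▸ Real.rpow_pos_of_pos hT0 _
    have hx3 : x ^ 3 = u⁻¹ := by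
      rw [hxdef, hudef, ← Real.rpow_natCast (T ^ (-(1:ℝ)/6)), ← Real.rpow_mul hT0.le,
        ← Real.rpow_neg_one (T ^ ((1:ℝ)/2)), ← Real.rpow_mul hT0.le]
      norm_num
    have hy2 : y ^ 2 = v⁻¹ := by
      rw [hydef, hvdef, ← Real.rpow_natCast (Real.log T ^ (-(1:ℝ)/4)),
        ← Real.rpow_mul hlog0.le, ← Real.rpow_neg_one (Real.log T ^ ((1:ℝ)/2)),
        ← Real.rpow_mul hlog0.le]
      norm_num
    have hx2 : x ^ 2 = w⁻¹ := by
      rw [hxdef, hwdef, ← Real.rpow_natCast (T ^ (-(1:ℝ)/6)), ← Real.rpow_mul hT0.le,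
        ← Real.rpow_neg_one (T ^ ((1:ℝ)/3)), ← Real.rpow_mul hT0.le]
      norm_num
    have hw3 : w ^ 3 = T := by
      rw [hwdef, ← Real.rpow_natCast (T ^ ((1:ℝ)/3)), ← Real.rpow_mul hT0.le]
      norm_num
    have huw : u * w = T ^ ((5:ℝ)/6) := by
      rw [hudef, hwdef, ← Real.rpow_add hT0]
      norm_num
    -- l, ε, I values
    have hlv : l T = c₁ * x := by rw [hl T hT1, hxdef]
    have hIy : I T = c₂ * y := by rw [hI T hT1, hε T hT1, hydef]
    have hl0 : 0 < l T := by rw [hlv]; positivity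
    have hl1 : l T ≤ c₁ := by
      rw [hlv]; nth_rewrite 2 [← mul_one c₁]
      exact mul_le_mul_of_nonneg_left hx1 hc₁.le
    have h1l0 : (0:ℝ) < 1 + l T := by linarith
    -- b equality
    have hb_eq : b T = c₁ ^ 3 * c₂ ^ 2 * x ^ 3 * y ^ 2 / (64 * (1 + l T) ^ 3 * L ^ 2) := by
      rw [hb T hT1, hIy, hlv]
      field_simp
      ring
    have hb_ge : K * (x ^ 3 * y ^ 2) ≤ b T := by
      have heq : K * (x ^ 3 * y ^ 2) =
          c₁ ^ 3 * c₂ ^ 2 * x ^ 3 * y ^ 2 / (64 * (1 + c₁) ^ 3 * L ^ 2) := by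
        rw [hK]; ring
      rw [hb_eq, heq]
      gcongr
      all_goals first | positivity | linarith
    have hb_pos : 0 < b T := lt_of_lt_of_le (by positivity) hb_ge
    -- b upper bound
    have hb_le : b T ≤ c₂ ^ 2 / (64 * L ^ 2) := by
      have h1 : c₁ ^ 3 * x ^ 3 ≤ (1 + l T) ^ 3 := by
        have hcx : c₁ * x ≤ 1 + l T := by rw [hlv]; linarith
        calc c₁ ^ 3 * x ^ 3 = (c₁ * x) ^ 3 := by ring
          _ ≤ (1 + l T) ^ 3 := pow_le_pow_left₀ (by positivity) hcx 3
      have h2 : y ^ 2 ≤ 1 := by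
        calc y ^ 2 ≤ 1 ^ 2 := pow_le_pow_left₀ hy0.le hy1 2
          _ = 1 := one_pow 2
      have hnum : c₁ ^ 3 * c₂ ^ 2 * x ^ 3 * y ^ 2 ≤ c₂ ^ 2 * (1 + l T) ^ 3 := by
        have ha : c₁ ^ 3 * x ^ 3 * y ^ 2 ≤ (1 + l T) ^ 3 := by
          calc c₁ ^ 3 * x ^ 3 * y ^ 2 ≤ c₁ ^ 3 * x ^ 3 * 1 :=
                mul_le_mul_of_nonneg_left h2 (by positivity)
            _ = c₁ ^ 3 * x ^ 3 := by ring
            _ ≤ (1 + l T) ^ 3 := h1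
        calc c₁ ^ 3 * c₂ ^ 2 * x ^ 3 * y ^ 2 = c₂ ^ 2 * (c₁ ^ 3 * x ^ 3 * y ^ 2) := by ring
          _ ≤ c₂ ^ 2 * (1 + l T) ^ 3 := mul_le_mul_of_nonneg_left ha (by positivity)
      calc b T ≤ c₂ ^ 2 * (1 + l T) ^ 3 / (64 * (1 + l T) ^ 3 * L ^ 2) := by
            rw [hb_eq]; gcongr
        _ = c₂ ^ 2 / (64 * L ^ 2) := by field_simp
    -- B bounds
    have hB_eq : B T = 2 + 32 * (1 + l T) ^ 2 * L ^ 2 / (c₁ ^ 2 * c₂ ^ 2 * x ^ 2 * y ^ 2) := by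
      rw [hB T hT1, hIy, hlv]
      field_simp
      ring
    have hB2 : 2 ≤ B T := by
      rw [hB_eq]
      have : 0 < 32 * (1 + l T) ^ 2 * L ^ 2 / (c₁ ^ 2 * c₂ ^ 2 * x ^ 2 * y ^ 2) := by positivity
      linarith
    have hv_le : v ≤ 3 * w := by
      have h1 : v ≤ Real.log T := by
        rw [hvdef]
        nth_rewrite 2 [← Real.rpow_one (Real.log T)]
        exact Real.rpow_le_rpow_of_exponent_le hlog1 (by norm_num)
      have h2 : Real.log T ≤ T ^ ((1:ℝ)/3) / (1/3) := Real.log_le_rpow_div hT0.le (by norm_num)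
      rw [hwdef]; linarith
    have hB_le : B T ≤ T := by
      have step1 : B T ≤ 2 + A * (w * v) := by
        rw [hB_eq]
        have heq : A * (w * v) = 32 * (1 + c₁) ^ 2 * L ^ 2 / (c₁ ^ 2 * c₂ ^ 2 * x ^ 2 * y ^ 2) := by
          rw [hA]
          have hwx : w = (x ^ 2)⁻¹ := by rw [hx2, inv_inv]
          have hvy : v = (y ^ 2)⁻¹ := by rw [hy2, inv_inv]
          rw [hwx, hvy]
          field_simp
        rw [heq]
        have h1lc : (1 + l T) ^ 2 ≤ (1 + c₁) ^ 2 := by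
          apply pow_le_pow_left₀ h1l0.le; linarith
        gcongr
        all_goals first
          | positivity
          | linarith [mul_le_mul_of_nonneg_right h1lc (sq_nonneg L)]
      have step2 : A * (w * v) ≤ 3 * A * w ^ 2 := by
        calc A * (w * v) ≤ A * (w * (3 * w)) :=
              mul_le_mul_of_nonneg_left
                (mul_le_mul_of_nonneg_left hv_le hw0.le) hApos.le
          _ = 3 * A * w ^ 2 := by ring
      have step3 : 3 * A * w ^ 2 ≤ T / 2 := by
        have h6 : 6 * A * (w ^ 2) ≤ w * w ^ 2 := mul_le_mul_of_nonneg_right hA6 (sq_nonneg w)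
        have hww : w * w ^ 2 = T := by rw [← hw3]; ring
        linarith
      have : (2:ℝ) ≤ T / 2 := by linarith
      linarith
    -- log bound
    have hM1 : (1:ℝ) ≤ (M:ℝ) := by exact_mod_cast Nat.one_le_of_lt hM
    have hBpos : (0:ℝ) < B T := by linarith
    have h1b1 : (1:ℝ) ≤ 1 + b T := by linarith
    have hprod_pos : 0 < (M:ℝ) * B T * (1 + b T) :=
      mul_pos (mul_pos (by linarith) hBpos) (by linarith)
    have hprod1 : (1:ℝ) ≤ (M:ℝ) * B T * (1 + b T) := by
      have hMB : (1:ℝ) * 1 ≤ (M:ℝ) * B T :=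
        mul_le_mul hM1 (by linarith) zero_le_one (by linarith)
      have := mul_le_mul hMB h1b1 zero_le_one (by linarith : (0:ℝ) ≤ (M:ℝ) * B T)
      linarith
    have hlog_nonneg : 0 ≤ Real.log ((M:ℝ) * B T * (1 + b T)) := Real.log_nonneg hprod1
    have hqv := hq T hT1
    have hq1 : 1 ≤ q T := by
      rw [hqv]
      have h0 : 0 ≤ (1 / b T) * (1 + Real.log ((M:ℝ) * B T * (1 + b T))) :=
        mul_nonneg (le_of_lt (div_pos one_pos hb_pos)) (by linarith)
      linarith
    refine ⟨hq1, ?_⟩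
    have h1bT : 1 + b T ≤ T := by linarith
    have hlog3 : Real.log ((M:ℝ) * B T * (1 + b T)) ≤ 3 * Real.log T := by
      have hle : (M:ℝ) * B T * (1 + b T) ≤ T * T * T := by
        have hB0 : (0:ℝ) ≤ B T := by linarith
        have h1b0 : (0:ℝ) ≤ 1 + b T := by linarith
        calc (M:ℝ) * B T * (1 + b T) ≤ T * B T * (1 + b T) := by
              apply mul_le_mul_of_nonneg_right (mul_le_mul_of_nonneg_right hMT hB0) h1b0
          _ ≤ T * T * (1 + b T) := by
              apply mul_le_mul_of_nonneg_right (mul_le_mul_of_nonneg_left hB_le hT0.le) h1b0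
          _ ≤ T * T * T := by
              apply mul_le_mul_of_nonneg_left h1bT (by positivity)
      calc Real.log ((M:ℝ) * B T * (1 + b T)) ≤ Real.log (T * T * T) :=
            Real.log_le_log hprod_pos hle
        _ = 3 * Real.log T := by
            rw [Real.log_mul (by positivity) hT0.ne', Real.log_mul hT0.ne' hT0.ne']; ring
    -- 1/b bound
    have hinvb : 1 / b T ≤ (1 / K) * (u * v) := by
      rw [div_le_iff₀ hb_pos]
      have h1 : 1 / K * (u * v) * (K * (x ^ 3 * y ^ 2)) = 1 := by
        rw [hx3, hy2]
        field_simp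
      calc (1:ℝ) = 1 / K * (u * v) * (K * (x ^ 3 * y ^ 2)) := h1.symm
        _ ≤ 1 / K * (u * v) * b T := by
            apply mul_le_mul_of_nonneg_left hb_ge (by positivity)
    -- assemble
    rw [hqv]
    have step : (1 / b T) * (1 + Real.log ((M:ℝ) * B T * (1 + b T))) ≤
        (1 / K) * (u * v) * (4 * Real.log T) := by
      have h4 : 1 + Real.log ((M:ℝ) * B T * (1 + b T)) ≤ 4 * Real.log T := by linarith
      have hb1 : 0 ≤ 1 + Real.log ((M:ℝ) * B T * (1 + b T)) := by linarith
      calc (1 / b T) * (1 + Real.log ((M:ℝ) * B T * (1 + b T)))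
          ≤ (1 / K) * (u * v) * (1 + Real.log ((M:ℝ) * B T * (1 + b T))) :=
            mul_le_mul_of_nonneg_right hinvb hb1
        _ ≤ (1 / K) * (u * v) * (4 * Real.log T) := by
            apply mul_le_mul_of_nonneg_left h4 (by positivity)
    have hlogw : Real.log T ≤ 3 * w := by
      have h2 : Real.log T ≤ T ^ ((1:ℝ)/3) / (1/3) := Real.log_le_rpow_div hT0.le (by norm_num)
      rw [hwdef]; linarith
    have step2 : (1 / K) * (u * v) * (4 * Real.log T) ≤ (12 / K) * (u * w) * v := by
      calc (1 / K) * (u * v) * (4 * Real.log T) ≤ (1 / K) * (u * v) * (4 * (3 * w)) := by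
            apply mul_le_mul_of_nonneg_left (by linarith) (by positivity)
        _ = (12 / K) * (u * w) * v := by ring
    have hone : (1:ℝ) ≤ (u * w) * v := by
      have hu1 : (1:ℝ) ≤ u := hudef ▸ Real.one_le_rpow hT1.le (by norm_num)
      have hw1 : (1:ℝ) ≤ w := hwdef ▸ Real.one_le_rpow hT1.le (by norm_num)
      have hv1 : (1:ℝ) ≤ v := hvdef ▸ Real.one_le_rpow hlog1 (by norm_num)
      have huw1 : (1:ℝ) * 1 ≤ u * w := mul_le_mul hu1 hw1 zero_le_one (by linarith)
      have := mul_le_mul huw1 hv1 zero_le_one (by linarith : (0:ℝ) ≤ u * w)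
      linarith
    have final : 1 + (1 / b T) * (1 + Real.log ((M:ℝ) * B T * (1 + b T))) ≤
        C₀ * (u * w) * v := by
      have hC : 1 + (12 / K) * (u * w) * v ≤ C₀ * (u * w) * v := by
        have hexp : C₀ * (u * w) * v = (u * w) * v + (12 / K) * (u * w) * v := by
          rw [hC₀]; ring
        rw [hexp]
        linarith
      linarith
    calc 1 + (1 / b T) * (1 + Real.log ((M:ℝ) * B T * (1 + b T))) ≤ C₀ * (u * w) * v := final
      _ = C₀ * T ^ ((5:ℝ)/6) * Real.log T ^ ((1:ℝ)/2) := by rw [← huw, ← hvdef]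
  constructor
  · -- tendsto part via squeeze
    have upper : ∀ᶠ T in atTop, q T / T ≤ 12 * C₀ * T ^ (-(1:ℝ)/12) := by
      filter_upwards [key, eventually_gt_atTop (1:ℝ),
        Real.tendsto_log_atTop.eventually_ge_atTop 1] with T hk hT1 hlog1
      have hT0 : (0:ℝ) < T := by linarith
      have hlog0 : (0:ℝ) < Real.log T := by linarith
      have hv_le : Real.log T ^ ((1:ℝ)/2) ≤ 12 * T ^ ((1:ℝ)/12) := by
        have h1 : Real.log T ^ ((1:ℝ)/2) ≤ Real.log T := by
          nth_rewrite 2 [← Real.rpow_one (Real.log T)]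
          exact Real.rpow_le_rpow_of_exponent_le hlog1 (by norm_num)
        have h2 : Real.log T ≤ T ^ ((1:ℝ)/12) / (1/12) :=
          Real.log_le_rpow_div hT0.le (by norm_num)
        linarith
      have hq_le : q T ≤ C₀ * T ^ ((5:ℝ)/6) * (12 * T ^ ((1:ℝ)/12)) := by
        calc q T ≤ C₀ * T ^ ((5:ℝ)/6) * Real.log T ^ ((1:ℝ)/2) := hk.2
          _ ≤ C₀ * T ^ ((5:ℝ)/6) * (12 * T ^ ((1:ℝ)/12)) := by
              apply mul_le_mul_of_nonneg_left hv_le (by positivity)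
      rw [div_le_iff₀ hT0]
      calc q T ≤ C₀ * T ^ ((5:ℝ)/6) * (12 * T ^ ((1:ℝ)/12)) := hq_le
        _ = 12 * C₀ * T ^ (-(1:ℝ)/12) * T := by
            have h2 : T ^ (-(1:ℝ)/12) * T = T ^ ((11:ℝ)/12) := by
              calc T ^ (-(1:ℝ)/12) * T = T ^ (-(1:ℝ)/12) * T ^ (1:ℝ) := by
                    rw [Real.rpow_one]
                _ = T ^ (-(1:ℝ)/12 + 1) := (Real.rpow_add hT0 _ _).symm
                _ = T ^ ((11:ℝ)/12) := by norm_num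
            calc C₀ * T ^ ((5:ℝ)/6) * (12 * T ^ ((1:ℝ)/12))
                = 12 * C₀ * (T ^ ((5:ℝ)/6) * T ^ ((1:ℝ)/12)) := by ring
              _ = 12 * C₀ * T ^ ((11:ℝ)/12) := by rw [← Real.rpow_add hT0]; norm_num
              _ = 12 * C₀ * (T ^ (-(1:ℝ)/12) * T) := by rw [h2]
              _ = 12 * C₀ * T ^ (-(1:ℝ)/12) * T := by ring
    have lower : ∀ᶠ T in atTop, 0 ≤ q T / T := by
      filter_upwards [key, eventually_gt_atTop (0:ℝ)] with T hk hT0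
      exact div_nonneg (by linarith [hk.1]) hT0.le
    have htend : Tendsto (fun T : ℝ => 12 * C₀ * T ^ (-(1:ℝ)/12)) atTop (nhds 0) := by
      have h := (tendsto_rpow_neg_atTop (by norm_num : (0:ℝ) < 1/12)).const_mul (12 * C₀)
      rw [mul_zero] at h
      convert h using 3
      norm_num
    exact tendsto_of_tendsto_of_tendsto_of_le_of_le' tendsto_const_nhds htend lower upper
  · refine ⟨C₀, hC₀pos, ?_⟩
    obtain ⟨T₀, hT₀⟩ := eventually_atTop.mp key
    exact ⟨T₀, fun T hT => (hT₀ T hT).2⟩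
end

section
/- Fix real constants L > 0, c₁ > 0, c₂ > 0 and an integer M ≥ 2, and for real T > 1 define ε(T) = (log T)^{−1/4}, l(T) = c₁·T^{−1/6}, I(T) = c₂·ε(T), b(T) = ( l(T)³ / (4·(1+l(T))³) )·( I(T)/(4L) )², B(T) = 2 + ( 2·(1+l(T))² / l(T)² )·( 4L/I(T) )², Δ(T) = −M·B(T)·(1 + b(T))·exp( −b(T)·(T − 1) ), and K(x) = √(e·x + 1) − 1. Then: (a) there exists T₀ such that for all T ≥ T₀, −e^{−1} ≤ Δ(T) < 0; and (b) (1/T)·( 1 − K(Δ(T))/b(T) ) → 0 as T → ∞. -/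
open Filter

set_option maxHeartbeats 2000000 in
lemma table_core (L c₁ c₂ : ℝ) (hL : 0 < L) (hc₁ : 0 < c₁) (hc₂ : 0 < c₂)
    (Mr : ℝ) (hMr : 0 < Mr)
    (T : ℝ) (h1 : 1 < T) (h4 : 4 ≤ T) (hMT : Mr ≤ T)
    (hlog1 : 1 ≤ Real.log T) (hlog3 : Real.log T ≤ T ^ ((1:ℝ)/3))
    (hl1 : c₁ * T ^ (-(1:ℝ)/6) ≤ 1)
    (hD : 1 ≤ c₁^3*c₂^2/(512*L^2) * T ^ ((1:ℝ)/12))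
    (hC : 2*(128*L^2/(c₁^2*c₂^2)) ≤ T ^ ((1:ℝ)/2))
    (hb1 : c₁^3*c₂^2/(64*L^2) * T ^ (-(1:ℝ)/2) ≤ 1)
    (lT εT IT bT BT ΔT : ℝ)
    (hε : εT = Real.log T ^ (-(1 : ℝ) / 4))
    (hl : lT = c₁ * T ^ (-(1 : ℝ) / 6))
    (hI : IT = c₂ * εT)
    (hb : bT = (lT ^ 3 / (4 * (1 + lT) ^ 3)) * (IT / (4 * L)) ^ 2)
    (hB : BT = 2 + (2 * (1 + lT) ^ 2 / lT ^ 2) * (4 * L / IT) ^ 2)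
    (hΔ : ΔT = -(Mr * BT * (1 + bT)) * Real.exp (-bT * (T - 1))) :
    (0 < bT ∧ bT ≤ 1) ∧ ΔT < 0 ∧
      |ΔT| ≤ 2*Real.exp 1 * T^(3:ℝ) * Real.exp (-(T^((1:ℝ)/4))) ∧
      |ΔT| / bT ≤ 2*Real.exp 1 * T^(3:ℝ) * Real.exp (-(T^((1:ℝ)/4))) := by
  have hT0 : (0:ℝ) < T := by linarith
  have hTle : (0:ℝ) ≤ T := hT0.le
  have hlog0 : (0:ℝ) < Real.log T := by linarith
  have hT16n : (0:ℝ) < T ^ (-(1:ℝ)/6) := Real.rpow_pos_of_pos hT0 _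
  have hT112n : (0:ℝ) < T ^ (-(1:ℝ)/12) := Real.rpow_pos_of_pos hT0 _
  have hT12n : (0:ℝ) < T ^ (-(1:ℝ)/2) := Real.rpow_pos_of_pos hT0 _
  have hT13n : (0:ℝ) < T ^ (-(1:ℝ)/3) := Real.rpow_pos_of_pos hT0 _
  have hT34n : (0:ℝ) < T ^ (-(3:ℝ)/4) := Real.rpow_pos_of_pos hT0 _
  have hT13 : (0:ℝ) < T ^ ((1:ℝ)/3) := Real.rpow_pos_of_pos hT0 _
  have hT16 : (0:ℝ) < T ^ ((1:ℝ)/6) := Real.rpow_pos_of_pos hT0 _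
  have hT12 : (0:ℝ) < T ^ ((1:ℝ)/2) := Real.rpow_pos_of_pos hT0 _
  have hT112 : (0:ℝ) < T ^ ((1:ℝ)/12) := Real.rpow_pos_of_pos hT0 _
  have hT34 : (0:ℝ) < T ^ ((3:ℝ)/4) := Real.rpow_pos_of_pos hT0 _
  have hL2 : (0:ℝ) < 16 * L ^ 2 := by positivity
  have hl0 : 0 < lT := by rw [hl]; exact mul_pos hc₁ hT16n
  have hlle1 : lT ≤ 1 := by rw [hl]; exact hl1
  have h1l : (0:ℝ) < 1 + lT := by linarith
  have hl2le : lT ^ 2 ≤ 1 := pow_le_one₀ hl0.le hlle1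
  have hl3le : lT ^ 3 ≤ 1 := pow_le_one₀ hl0.le hlle1
  have hε0 : 0 < εT := by rw [hε]; exact Real.rpow_pos_of_pos hlog0 _
  have hεle1 : εT ≤ 1 := by
    rw [hε]; exact Real.rpow_le_one_of_one_le_of_nonpos hlog1 (by norm_num)
  have hεlow : T ^ (-(1:ℝ)/12) ≤ εT := by
    rw [hε]
    calc T ^ (-(1:ℝ)/12) = (T ^ ((1:ℝ)/3)) ^ (-(1:ℝ)/4) := by
          rw [← Real.rpow_mul hTle]; norm_num
      _ ≤ Real.log T ^ (-(1:ℝ)/4) :=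
          Real.rpow_le_rpow_of_nonpos hlog0 hlog3 (by norm_num)
  have hI0 : 0 < IT := by rw [hI]; exact mul_pos hc₂ hε0
  have hIlow : c₂ * T ^ (-(1:ℝ)/12) ≤ IT := by
    rw [hI]; exact mul_le_mul_of_nonneg_left hεlow hc₂.le
  have hIup : IT ≤ c₂ := by
    rw [hI]; exact mul_le_of_le_one_right hc₂.le hεle1
  have hl3 : lT ^ 3 = c₁ ^ 3 * T ^ (-(1:ℝ)/2) := by
    rw [hl, mul_pow, ← Real.rpow_natCast (T ^ (-(1:ℝ)/6)) 3, ← Real.rpow_mul hTle]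
    norm_num
  have hl2 : lT ^ 2 = c₁ ^ 2 * T ^ (-(1:ℝ)/3) := by
    rw [hl, mul_pow, ← Real.rpow_natCast (T ^ (-(1:ℝ)/6)) 2, ← Real.rpow_mul hTle]
    norm_num
  have hI2low : c₂ ^ 2 * T ^ (-(1:ℝ)/6) ≤ IT ^ 2 := by
    have h2 : (c₂ * T ^ (-(1:ℝ)/12)) ^ 2 ≤ IT ^ 2 :=
      pow_le_pow_left₀ (mul_pos hc₂ hT112n).le hIlow 2
    calc c₂ ^ 2 * T ^ (-(1:ℝ)/6) = (c₂ * T ^ (-(1:ℝ)/12)) ^ 2 := by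
          rw [mul_pow, ← Real.rpow_natCast (T ^ (-(1:ℝ)/12)) 2, ← Real.rpow_mul hTle]
          norm_num
      _ ≤ IT ^ 2 := h2
  have hI2up : IT ^ 2 ≤ c₂ ^ 2 := pow_le_pow_left₀ hI0.le hIup 2
  have hI2pos : 0 < IT ^ 2 := pow_pos hI0 2
  -- b bounds
  have hb0 : 0 < bT := by
    rw [hb]
    exact mul_pos (div_pos (pow_pos hl0 3) (mul_pos (by norm_num : (0:ℝ) < 4) (pow_pos h1l 3)))
      (pow_pos (div_pos hI0 (by linarith)) 2)
  have hblow : T ^ (-(3:ℝ)/4) ≤ bT := by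
    have step1 : lT ^ 3 / 32 ≤ lT ^ 3 / (4 * (1 + lT) ^ 3) := by
      apply div_le_div_of_nonneg_left (pow_pos hl0 3).le
        (mul_pos (by norm_num : (0:ℝ) < 4) (pow_pos h1l 3))
      linarith only [hlle1, hl2le, hl3le]
    have step2 : c₂ ^ 2 * T ^ (-(1:ℝ)/6) / (16 * L ^ 2) ≤ (IT / (4 * L)) ^ 2 := by
      rw [div_pow, show ((4:ℝ) * L) ^ 2 = 16 * L ^ 2 by ring]
      exact div_le_div_of_nonneg_right hI2low hL2.le
    have hmul : (lT ^ 3 / 32) * (c₂ ^ 2 * T ^ (-(1:ℝ)/6) / (16 * L ^ 2)) ≤ bT := by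
      rw [hb]
      apply mul_le_mul step1 step2
        (div_nonneg (mul_nonneg (sq_nonneg c₂) hT16n.le) hL2.le)
        (div_nonneg (pow_pos hl0 3).le (mul_pos (by norm_num : (0:ℝ) < 4) (pow_pos h1l 3)).le)
    have key : (lT ^ 3 / 32) * (c₂ ^ 2 * T ^ (-(1:ℝ)/6) / (16 * L ^ 2))
        = c₁^3*c₂^2/(512*L^2) * (T ^ (-(1:ℝ)/2) * T ^ (-(1:ℝ)/6)) := by
      rw [hl3]; field_simp; ring
    rw [key, ← Real.rpow_add hT0] at hmul
    norm_num at hmul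
    rw [show (-(2/3) : ℝ) = (-(2:ℝ)/3) by norm_num] at hmul
    refine le_trans ?_ hmul
    have hsplit : T ^ (-(2:ℝ)/3) = T ^ ((1:ℝ)/12) * T ^ (-(3:ℝ)/4) := by
      rw [← Real.rpow_add hT0]; norm_num
    calc T ^ (-(3:ℝ)/4) = 1 * T ^ (-(3:ℝ)/4) := (one_mul _).symm
      _ ≤ (c₁^3*c₂^2/(512*L^2) * T ^ ((1:ℝ)/12)) * T ^ (-(3:ℝ)/4) :=
          mul_le_mul_of_nonneg_right hD hT34n.le
      _ = c₁^3*c₂^2/(512*L^2) * T ^ (-(2:ℝ)/3) := by rw [hsplit]; ring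
  have hbup : bT ≤ 1 := by
    have step1 : lT ^ 3 / (4 * (1 + lT) ^ 3) ≤ lT ^ 3 / 4 := by
      apply div_le_div_of_nonneg_left (pow_pos hl0 3).le (by norm_num)
      linarith only [hl0.le, sq_nonneg lT, (pow_pos hl0 3).le]
    have step2 : (IT / (4 * L)) ^ 2 ≤ c₂ ^ 2 / (16 * L ^ 2) := by
      rw [div_pow, show ((4:ℝ) * L) ^ 2 = 16 * L ^ 2 by ring]
      exact div_le_div_of_nonneg_right hI2up hL2.le
    have hmul : bT ≤ (lT ^ 3 / 4) * (c₂ ^ 2 / (16 * L ^ 2)) := by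
      rw [hb]
      apply mul_le_mul step1 step2 (sq_nonneg _)
        (div_nonneg (pow_pos hl0 3).le (by norm_num))
    have key : (lT ^ 3 / 4) * (c₂ ^ 2 / (16 * L ^ 2))
        = c₁^3*c₂^2/(64*L^2) * T ^ (-(1:ℝ)/2) := by
      rw [hl3]; field_simp; ring
    rw [key] at hmul
    linarith
  -- B bound
  have hBterm : 0 < 2 * (1 + lT) ^ 2 / lT ^ 2 :=
    div_pos (mul_pos (by norm_num) (pow_pos h1l 2)) (pow_pos hl0 2)
  have hB0 : 0 < BT := by
    rw [hB]
    have := mul_nonneg hBterm.le (sq_nonneg (4 * L / IT))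
    linarith
  have hBup : BT ≤ T := by
    have hinv3 : (T ^ (-(1:ℝ)/3))⁻¹ = T ^ ((1:ℝ)/3) := by
      rw [show (-(1:ℝ)/3) = -((1:ℝ)/3) by norm_num, Real.rpow_neg hTle, inv_inv]
    have hinv6 : (T ^ (-(1:ℝ)/6))⁻¹ = T ^ ((1:ℝ)/6) := by
      rw [show (-(1:ℝ)/6) = -((1:ℝ)/6) by norm_num, Real.rpow_neg hTle, inv_inv]
    have step1 : 2 * (1 + lT) ^ 2 / lT ^ 2 ≤ 8 / c₁ ^ 2 * T ^ ((1:ℝ)/3) := by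
      rw [hl2]
      have h8 : 2 * (1 + lT) ^ 2 ≤ 8 := by linarith only [hlle1, hl2le]
      calc 2 * (1 + lT) ^ 2 / (c₁ ^ 2 * T ^ (-(1:ℝ)/3))
          ≤ 8 / (c₁ ^ 2 * T ^ (-(1:ℝ)/3)) :=
            div_le_div_of_nonneg_right h8 (mul_pos (pow_pos hc₁ 2) hT13n).le
        _ = 8 / c₁ ^ 2 * T ^ ((1:ℝ)/3) := by
            rw [div_mul_eq_div_div, div_eq_mul_inv (8 / c₁ ^ 2), hinv3]
    have step2 : (4 * L / IT) ^ 2 ≤ 16 * L ^ 2 / c₂ ^ 2 * T ^ ((1:ℝ)/6) := by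
      rw [div_pow, show ((4:ℝ) * L) ^ 2 = 16 * L ^ 2 by ring]
      calc 16 * L ^ 2 / IT ^ 2 ≤ 16 * L ^ 2 / (c₂ ^ 2 * T ^ (-(1:ℝ)/6)) :=
            div_le_div_of_nonneg_left hL2.le (mul_pos (pow_pos hc₂ 2) hT16n) hI2low
        _ = 16 * L ^ 2 / c₂ ^ 2 * T ^ ((1:ℝ)/6) := by
            rw [div_mul_eq_div_div, div_eq_mul_inv (16 * L ^ 2 / c₂ ^ 2), hinv6]
    have hmul : (2 * (1 + lT) ^ 2 / lT ^ 2) * (4 * L / IT) ^ 2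
        ≤ 128 * L ^ 2 / (c₁ ^ 2 * c₂ ^ 2) * T ^ ((1:ℝ)/2) := by
      have hstep := mul_le_mul step1 step2 (sq_nonneg _)
        (mul_nonneg (div_nonneg (by norm_num) (sq_nonneg c₁)) hT13.le)
      refine hstep.trans (le_of_eq ?_)
      rw [show T ^ ((1:ℝ)/2) = T ^ ((1:ℝ)/3) * T ^ ((1:ℝ)/6) by
        rw [← Real.rpow_add hT0]; norm_num]
      field_simp
      ring
    have hhalf : 128 * L ^ 2 / (c₁ ^ 2 * c₂ ^ 2) * T ^ ((1:ℝ)/2) ≤ T / 2 := by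
      have hTsq : T ^ ((1:ℝ)/2) * T ^ ((1:ℝ)/2) = T := by
        rw [← Real.rpow_add hT0]; norm_num
      have hC2 : 128 * L ^ 2 / (c₁ ^ 2 * c₂ ^ 2) ≤ T ^ ((1:ℝ)/2) / 2 := by linarith
      calc 128 * L ^ 2 / (c₁ ^ 2 * c₂ ^ 2) * T ^ ((1:ℝ)/2)
          ≤ (T ^ ((1:ℝ)/2) / 2) * T ^ ((1:ℝ)/2) :=
            mul_le_mul_of_nonneg_right hC2 hT12.le
        _ = T / 2 := by rw [div_mul_eq_mul_div, hTsq]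
    rw [hB]
    linarith
  -- Δ facts
  have hA0 : 0 < Mr * BT * (1 + bT) := by
    apply mul_pos (mul_pos hMr hB0); linarith
  have hePos := Real.exp_pos (-bT * (T - 1))
  have hΔneg : ΔT < 0 := by
    rw [hΔ, neg_mul]
    exact neg_lt_zero.mpr (mul_pos hA0 hePos)
  have habs : |ΔT| = Mr * BT * (1 + bT) * Real.exp (-bT * (T - 1)) := by
    rw [hΔ, neg_mul, abs_neg, abs_of_pos (mul_pos hA0 hePos)]
  -- exponential bound
  have hexp : Real.exp (-bT * (T - 1)) ≤ Real.exp 1 * Real.exp (-(T ^ ((1:ℝ)/4))) := by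
    rw [← Real.exp_add]
    apply Real.exp_le_exp.mpr
    have h1' : T ^ (-(3:ℝ)/4) * (T - 1) ≤ bT * (T - 1) :=
      mul_le_mul_of_nonneg_right hblow (by linarith)
    have h2' : T ^ (-(3:ℝ)/4) * T = T ^ ((1:ℝ)/4) := by
      nth_rewrite 2 [← Real.rpow_one T]
      rw [← Real.rpow_add hT0]; norm_num
    have h3' : T ^ (-(3:ℝ)/4) ≤ 1 :=
      Real.rpow_le_one_of_one_le_of_nonpos h1.le (by norm_num)
    have h1'' : T ^ ((1:ℝ)/4) - T ^ (-(3:ℝ)/4) ≤ bT * (T - 1) := by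
      have : T ^ (-(3:ℝ)/4) * (T - 1) = T ^ ((1:ℝ)/4) - T ^ (-(3:ℝ)/4) := by
        rw [mul_sub, mul_one, h2']
      linarith only [h1', this]
    linarith only [h1'', h3']
  have hAle : Mr * BT * (1 + bT) ≤ 2 * (T * T) := by
    have hMB : Mr * BT ≤ T * T := mul_le_mul hMT hBup hB0.le hTle
    have ha : Mr * BT * (1 + bT) ≤ T * T * (1 + bT) :=
      mul_le_mul_of_nonneg_right hMB (by linarith)
    have hbb : T * T * (1 + bT) ≤ T * T * 2 :=
      mul_le_mul_of_nonneg_left (by linarith) (mul_nonneg hTle hTle)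
    linarith only [ha, hbb]
  have hstep : |ΔT| ≤ 2 * (T * T) * (Real.exp 1 * Real.exp (-(T ^ ((1:ℝ)/4)))) := by
    rw [habs]
    exact mul_le_mul hAle hexp hePos.le (by have := mul_pos hT0 hT0; linarith)
  have hT2 : T * T = T ^ (2:ℝ) := by
    rw [show (2:ℝ) = ((2:ℕ):ℝ) by norm_num, Real.rpow_natCast]; ring
  have hTT3 : T * T ≤ T ^ (3:ℝ) := by
    rw [hT2]; exact Real.rpow_le_rpow_of_exponent_le h1.le (by norm_num)
  have hexp4pos := Real.exp_pos (-(T ^ ((1:ℝ)/4)))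
  have hΔabs : |ΔT| ≤ 2 * Real.exp 1 * T ^ (3:ℝ) * Real.exp (-(T ^ ((1:ℝ)/4))) := by
    refine hstep.trans ?_
    have hkey := mul_le_mul_of_nonneg_left hTT3
      (by positivity : (0:ℝ) ≤ 2 * Real.exp 1 * Real.exp (-(T ^ ((1:ℝ)/4))))
    linarith only [hkey]
  -- division bound
  have honeover : 1 ≤ T ^ ((3:ℝ)/4) * bT := by
    have h := mul_le_mul_of_nonneg_left hblow hT34.le
    rw [← Real.rpow_add hT0] at h
    norm_num at h
    exact h
  have hdivle : |ΔT| / bT ≤ |ΔT| * T ^ ((3:ℝ)/4) := by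
    rw [div_le_iff₀ hb0]
    calc |ΔT| = |ΔT| * 1 := (mul_one _).symm
      _ ≤ |ΔT| * (T ^ ((3:ℝ)/4) * bT) := mul_le_mul_of_nonneg_left honeover (abs_nonneg _)
      _ = |ΔT| * T ^ ((3:ℝ)/4) * bT := (mul_assoc _ _ _).symm
  have hTT34 : T * T * T ^ ((3:ℝ)/4) ≤ T ^ (3:ℝ) := by
    have he : T * T * T ^ ((3:ℝ)/4) = T ^ ((11:ℝ)/4) := by
      rw [hT2, ← Real.rpow_add hT0]; norm_num
    rw [he]; exact Real.rpow_le_rpow_of_exponent_le h1.le (by norm_num)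
  have hΔdiv : |ΔT| / bT ≤ 2 * Real.exp 1 * T ^ (3:ℝ) * Real.exp (-(T ^ ((1:ℝ)/4))) := by
    refine hdivle.trans ?_
    calc |ΔT| * T ^ ((3:ℝ)/4)
        ≤ 2 * (T * T) * (Real.exp 1 * Real.exp (-(T ^ ((1:ℝ)/4)))) * T ^ ((3:ℝ)/4) :=
          mul_le_mul_of_nonneg_right hstep hT34.le
      _ = 2 * Real.exp 1 * Real.exp (-(T ^ ((1:ℝ)/4))) * (T * T * T ^ ((3:ℝ)/4)) := by ring
      _ ≤ 2 * Real.exp 1 * Real.exp (-(T ^ ((1:ℝ)/4))) * T ^ (3:ℝ) :=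
          mul_le_mul_of_nonneg_left hTT34 (by positivity)
      _ = 2 * Real.exp 1 * T ^ (3:ℝ) * Real.exp (-(T ^ ((1:ℝ)/4))) := by ring
  exact ⟨⟨hb0, hbup⟩, hΔneg, hΔabs, hΔdiv⟩
set_option maxHeartbeats 1000000 in
/-- Table I quantities of the paper: (a) for `T` large, `Δ(T)` lies in `[-1/e, 0)` (the
domain of the function `K` and of the principal Lambert-W branch); (b) the threshold margin
`1 − K(Δ(T))/b(T)` is `o(T)`. -/
theorem delta_in_domain_and_margin_sublinear
    (L c₁ c₂ : ℝ) (hL : 0 < L) (hc₁ : 0 < c₁) (hc₂ : 0 < c₂)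
    (M : ℕ) (hM : 2 ≤ M)
    (ε l I b B Δ : ℝ → ℝ) (K : ℝ → ℝ)
    (hε : ∀ T > 1, ε T = Real.log T ^ (-(1 : ℝ) / 4))
    (hl : ∀ T > 1, l T = c₁ * T ^ (-(1 : ℝ) / 6))
    (hI : ∀ T > 1, I T = c₂ * ε T)
    (hb : ∀ T > 1, b T = (l T ^ 3 / (4 * (1 + l T) ^ 3)) * (I T / (4 * L)) ^ 2)
    (hB : ∀ T > 1, B T = 2 + (2 * (1 + l T) ^ 2 / l T ^ 2) * (4 * L / I T) ^ 2)
    (hΔ : ∀ T > 1, Δ T = -((M : ℝ) * B T * (1 + b T)) * Real.exp (-(b T) * (T - 1)))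
    (hK : ∀ x : ℝ, K x = Real.sqrt (Real.exp 1 * x + 1) - 1) :
    (∃ T₀ : ℝ, ∀ T ≥ T₀, -Real.exp (-1) ≤ Δ T ∧ Δ T < 0) ∧
      Tendsto (fun T => (1 / T) * (1 - K (Δ T) / b T)) atTop (nhds 0) := by
  have hMr : (0:ℝ) < (M:ℝ) := by
    have : (2:ℝ) ≤ (M:ℝ) := by exact_mod_cast hM
    linarith
  set g : ℝ → ℝ := fun T => 2 * Real.exp 1 * T ^ (3:ℝ) * Real.exp (-(T ^ ((1:ℝ)/4)))
    with hg_def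
  -- eventual hypotheses of `table_core`
  have hlog1ev : ∀ᶠ T : ℝ in atTop, 1 ≤ Real.log T :=
    Real.tendsto_log_atTop.eventually_ge_atTop 1
  have hlog3ev : ∀ᶠ T : ℝ in atTop, Real.log T ≤ T ^ ((1:ℝ)/3) := by
    have h := Asymptotics.isLittleO_iff.mp
      (isLittleO_log_rpow_atTop (by norm_num : (0:ℝ) < 1/3)) one_pos
    filter_upwards [h, eventually_ge_atTop (1:ℝ)] with T hT h1T
    have h0 : (0:ℝ) ≤ T ^ ((1:ℝ)/3) := Real.rpow_nonneg (by linarith) _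
    calc Real.log T ≤ |Real.log T| := le_abs_self _
      _ ≤ 1 * ‖T ^ ((1:ℝ)/3)‖ := by rw [← Real.norm_eq_abs]; exact hT
      _ = T ^ ((1:ℝ)/3) := by rw [one_mul, Real.norm_eq_abs, abs_of_nonneg h0]
  have hl1ev : ∀ᶠ T : ℝ in atTop, c₁ * T ^ (-(1:ℝ)/6) ≤ 1 := by
    have ht : Tendsto (fun T : ℝ => c₁ * T ^ (-(1:ℝ)/6)) atTop (nhds 0) := by
      have := (tendsto_rpow_neg_atTop (by norm_num : (0:ℝ) < 1/6)).const_mul c₁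
      simpa [neg_div] using this
    exact ht.eventually_le_const one_pos
  have hDev : ∀ᶠ T : ℝ in atTop, 1 ≤ c₁^3*c₂^2/(512*L^2) * T ^ ((1:ℝ)/12) := by
    have ht : Tendsto (fun T : ℝ => c₁^3*c₂^2/(512*L^2) * T ^ ((1:ℝ)/12)) atTop atTop :=
      Tendsto.const_mul_atTop (by positivity) (tendsto_rpow_atTop (by norm_num))
    exact ht.eventually_ge_atTop 1
  have hCev : ∀ᶠ T : ℝ in atTop, 2*(128*L^2/(c₁^2*c₂^2)) ≤ T ^ ((1:ℝ)/2) :=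
    (tendsto_rpow_atTop (by norm_num : (0:ℝ) < 1/2)).eventually_ge_atTop _
  have hb1ev : ∀ᶠ T : ℝ in atTop, c₁^3*c₂^2/(64*L^2) * T ^ (-(1:ℝ)/2) ≤ 1 := by
    have ht : Tendsto (fun T : ℝ => c₁^3*c₂^2/(64*L^2) * T ^ (-(1:ℝ)/2)) atTop (nhds 0) := by
      have := (tendsto_rpow_neg_atTop (by norm_num : (0:ℝ) < 1/2)).const_mul
        (c₁^3*c₂^2/(64*L^2))
      simpa [neg_div] using this
    exact ht.eventually_le_const one_pos
  have key : ∀ᶠ T : ℝ in atTop, (0 < b T ∧ b T ≤ 1) ∧ Δ T < 0 ∧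
      |Δ T| ≤ g T ∧ |Δ T| / b T ≤ g T := by
    filter_upwards [eventually_gt_atTop (1:ℝ), eventually_ge_atTop (4:ℝ),
      eventually_ge_atTop ((M:ℝ)), hlog1ev, hlog3ev, hl1ev, hDev, hCev, hb1ev] with
      T h1 h4 hMT hL1 hL3 hl1' hD' hC' hb1'
    exact table_core L c₁ c₂ hL hc₁ hc₂ (M:ℝ) hMr T h1 h4 hMT hL1 hL3 hl1' hD' hC' hb1'
      (l T) (ε T) (I T) (b T) (B T) (Δ T)
      (hε T h1) (hl T h1) (hI T h1) (hb T h1) (hB T h1) (hΔ T h1)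
  -- g → 0
  have hg0 : Tendsto g atTop (nhds 0) := by
    have h12 : Tendsto (fun s : ℝ => s ^ (12:ℕ) * Real.exp (-s)) atTop (nhds 0) :=
      Real.tendsto_pow_mul_exp_neg_atTop_nhds_zero 12
    have hcomp : Tendsto (fun T : ℝ => (T ^ ((1:ℝ)/4)) ^ (12:ℕ) *
        Real.exp (-(T ^ ((1:ℝ)/4)))) atTop (nhds 0) :=
      h12.comp (tendsto_rpow_atTop (by norm_num : (0:ℝ) < 1/4))
    have hmul : Tendsto (fun T : ℝ => 2 * Real.exp 1 *
        ((T ^ ((1:ℝ)/4)) ^ (12:ℕ) * Real.exp (-(T ^ ((1:ℝ)/4))))) atTop (nhds 0) := by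
      have := hcomp.const_mul (2 * Real.exp 1)
      simpa using this
    refine Tendsto.congr' ?_ hmul
    filter_upwards [eventually_ge_atTop (0:ℝ)] with T hT
    have h312 : ((T ^ ((1:ℝ)/4)) ^ (12:ℕ) : ℝ) = T ^ (3:ℝ) := by
      rw [← Real.rpow_natCast (T ^ ((1:ℝ)/4)) 12, ← Real.rpow_mul hT]
      norm_num
    simp only [hg_def, h312]
    ring
  -- part (a)
  have hgsmall : ∀ᶠ T : ℝ in atTop,
      g T ≤ Real.exp (-1) ∧ g T ≤ 1 / (2 * Real.exp 1) := by
    have h1 := hg0.eventually_le_const (Real.exp_pos (-1))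
    have h2 := hg0.eventually_le_const (by positivity : (0:ℝ) < 1 / (2 * Real.exp 1))
    exact h1.and h2
  have parta : ∃ T₀ : ℝ, ∀ T ≥ T₀, -Real.exp (-1) ≤ Δ T ∧ Δ T < 0 := by
    rcases eventually_atTop.mp (key.and hgsmall) with ⟨T₀, hT₀⟩
    refine ⟨T₀, fun T hT => ?_⟩
    obtain ⟨⟨-, hΔneg, hΔabs, -⟩, hgs, -⟩ := hT₀ T hT
    refine ⟨?_, hΔneg⟩
    have : |Δ T| ≤ Real.exp (-1) := hΔabs.trans hgs
    linarith [(abs_le.mp this).1]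
  refine ⟨parta, ?_⟩
  -- part (b)
  have hq : Tendsto (fun T => Δ T / b T) atTop (nhds 0) := by
    apply squeeze_zero_norm' ?_ hg0
    filter_upwards [key] with T ⟨⟨hb0, _⟩, _, _, hdiv⟩
    rw [Real.norm_eq_abs, abs_div, abs_of_pos hb0]
    exact hdiv
  have hΔten : Tendsto Δ atTop (nhds 0) := by
    apply squeeze_zero_norm' ?_ hg0
    filter_upwards [key] with T ⟨_, _, habs, _⟩
    rw [Real.norm_eq_abs]
    exact habs
  have hΔsmall : ∀ᶠ T : ℝ in atTop, |Δ T| ≤ 1 / (2 * Real.exp 1) := by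
    filter_upwards [key, hgsmall] with T hk hgs
    exact hk.2.2.1.trans hgs.2
  -- denominator tendsto 2
  have hsq : Tendsto (fun T => Real.sqrt (Real.exp 1 * Δ T + 1) + 1) atTop (nhds 2) := by
    have h1 : Tendsto (fun T => Real.exp 1 * Δ T + 1) atTop (nhds 1) := by
      have := (hΔten.const_mul (Real.exp 1)).add_const 1
      simpa using this
    have h2 : Tendsto (fun T => Real.sqrt (Real.exp 1 * Δ T + 1)) atTop (nhds 1) := by
      have := (Real.continuous_sqrt.tendsto 1).comp h1
      simpa [Real.sqrt_one, Function.comp_def] using this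
    have := h2.add_const 1
    norm_num at this
    exact this
  have hKq : Tendsto (fun T => K (Δ T) / b T) atTop (nhds 0) := by
    have hform : Tendsto (fun T => Real.exp 1 * (Δ T / b T) /
        (Real.sqrt (Real.exp 1 * Δ T + 1) + 1)) atTop (nhds 0) := by
      have := (hq.const_mul (Real.exp 1)).div hsq (by norm_num)
      simpa [Pi.div_def] using this
    refine Tendsto.congr' ?_ hform
    filter_upwards [key, hΔsmall] with T hk hsm
    have hb0 := hk.1.1
    have hx0 : 0 ≤ Real.exp 1 * Δ T + 1 := by
      have he := Real.exp_pos (1:ℝ)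
      have h1 : Real.exp 1 * Δ T ≥ -(Real.exp 1 * |Δ T|) := by
        have := neg_abs_le (Δ T)
        nlinarith [abs_nonneg (Δ T)]
      have h2 : Real.exp 1 * |Δ T| ≤ 1/2 := by
        have := hsm
        rw [le_div_iff₀ (by positivity)] at this
        nlinarith [abs_nonneg (Δ T)]
      linarith
    have hs0 : 0 < Real.sqrt (Real.exp 1 * Δ T + 1) + 1 := by
      have := Real.sqrt_nonneg (Real.exp 1 * Δ T + 1)
      linarith
    have hkey : Real.sqrt (Real.exp 1 * Δ T + 1) - 1
        = Real.exp 1 * Δ T / (Real.sqrt (Real.exp 1 * Δ T + 1) + 1) := by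
      rw [eq_div_iff hs0.ne']
      have hms := Real.mul_self_sqrt hx0
      linear_combination hms
    rw [hK, hkey]
    field_simp [hb0.ne', hs0.ne']
  have hfrac : Tendsto (fun T : ℝ => 1 / T) atTop (nhds 0) := by
    simpa [one_div] using (tendsto_inv_atTop_zero (𝕜 := ℝ))
  have h1K : Tendsto (fun T => 1 - K (Δ T) / b T) atTop (nhds 1) := by
    have h := (tendsto_const_nhds (x := (1:ℝ)) (f := atTop)).sub hKq
    simpa using h
  have := hfrac.mul h1K
  simpa using this
end

section
/- Define K(x) = √(e·x + 1) − 1 for real x, where e is Euler's number. Then for every x with −e^{−1} ≤ x ≤ 0, K(x) ≤ x·e^{−K(x)}. -/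
/-- The Lambert-W comparison step (Eqs. (39)–(44)): with `K(x) = √(e·x + 1) − 1`, for every
`x ∈ [−e^{−1}, 0]`, one has `K(x) ≤ x·e^{−K(x)}`. -/
theorem K_le_mul_exp_neg_K (x : ℝ) (hx₁ : -Real.exp (-1) ≤ x) (hx₂ : x ≤ 0) :
    Real.sqrt (Real.exp 1 * x + 1) - 1 ≤
      x * Real.exp (-(Real.sqrt (Real.exp 1 * x + 1) - 1)) := by
  set t := Real.sqrt (Real.exp 1 * x + 1) with ht
  have hnn : 0 ≤ Real.exp 1 * x + 1 := by
    nlinarith [Real.exp_neg 1, Real.exp_pos (1:ℝ), mul_le_mul_of_nonneg_left hx₁ (Real.exp_pos 1).le,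
      mul_inv_cancel₀ (ne_of_gt (Real.exp_pos (1:ℝ)))]
  have ht2 : t ^ 2 = Real.exp 1 * x + 1 := Real.sq_sqrt hnn
  have htpos : 0 ≤ t := Real.sqrt_nonneg _
  have hexp : t + 1 ≤ Real.exp t := Real.add_one_le_exp t
  -- goal: t - 1 ≤ x * exp(-(t-1)) = x * exp 1 * exp (-t)
  have key : (t - 1) * Real.exp t ≤ Real.exp 1 * x := by
    have h1 : t - 1 ≤ 0 := by
      nlinarith [Real.sqrt_nonneg (Real.exp 1 * x + 1),
        mul_nonpos_of_nonneg_of_nonpos (Real.exp_pos (1:ℝ)).le hx₂]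
    nlinarith [mul_nonpos_of_nonpos_of_nonneg h1 htpos]
  have hrw : x * Real.exp (-(t - 1)) = (Real.exp 1 * x) * Real.exp (-t) := by
    rw [show -(t-1) = 1 + -t by ring, Real.exp_add]; ring
  rw [hrw]
  have hep : 0 < Real.exp (-t) := Real.exp_pos _
  calc t - 1 = (t - 1) * Real.exp t * Real.exp (-t) := by
        rw [mul_assoc, ← Real.exp_add]; simp
    _ ≤ (Real.exp 1 * x) * Real.exp (-t) := by
        exact mul_le_mul_of_nonneg_right key hep.le
end

section
/- Let b > 0, M ≥ 2, B ≥ 2 and T be real numbers with T ≥ 1 + (1/b)·( 1 + log( M·B·(1 + b) ) ). Define Δ = −M·B·(1 + b)·exp( −b·(T − 1) ), K = √(e·Δ + 1) − 1, and let κ = ⌈ T − 1 + K/b ⌉ (a nonnegative integer). Then −e^{−1} ≤ Δ < 0, and Σ_{k=0}^{∞} M·B·exp( −(κ + k)·b ) ≤ −K/b; that is, Σ_{k ≥ κ} M·B·e^{−k·b} ≤ −K/b. -/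
set_option maxHeartbeats 1000000


/-- Section V-B computation (Eqs. (38)–(44)): for `b > 0`, `M, B ≥ 2` and
`T ≥ 1 + (1/b)(1 + log(M·B·(1+b)))`, setting `Δ = −M·B·(1+b)·e^{−b(T−1)}`,
`K = √(e·Δ + 1) − 1` and `κ = ⌈T − 1 + K/b⌉` (a nonnegative integer), one has
`−e^{−1} ≤ Δ < 0` and `Σ_{k≥κ} M·B·e^{−k·b} ≤ −K/b`. -/
theorem tail_sum_le_neg_K_div_b (b M B T : ℝ) (hb : 0 < b) (hM : 2 ≤ M) (hB : 2 ≤ B)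
    (hT : 1 + (1 / b) * (1 + Real.log (M * B * (1 + b))) ≤ T) :
    ∀ Δ K : ℝ, Δ = -(M * B * (1 + b)) * Real.exp (-b * (T - 1)) →
      K = Real.sqrt (Real.exp 1 * Δ + 1) - 1 →
      -Real.exp (-1) ≤ Δ ∧ Δ < 0 ∧ 0 ≤ ⌈T - 1 + K / b⌉ ∧
        (∑' k : ℕ, M * B * Real.exp (-(((⌈T - 1 + K / b⌉ : ℤ) : ℝ) + (k : ℝ)) * b))
          ≤ -K / b := by
  intro Δ K hΔ hK
  set C : ℝ := M * B * (1 + b) with hC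
  clear_value C
  have hMB : 4 ≤ M * B := by nlinarith
  have hC4 : 4 ≤ C := by nlinarith
  have hCpos : (0:ℝ) < C := by linarith
  have hlogC : 0 < Real.log C := Real.log_pos (by linarith)
  have hbT : 1 + Real.log C ≤ b * (T - 1) := by
    have h1 : (1 / b) * (1 + Real.log C) ≤ T - 1 := by linarith
    rw [one_div, inv_mul_le_iff₀ hb] at h1
    linarith [h1]
  have hexp_le : Real.exp (-b * (T - 1)) ≤ Real.exp (-1) / C := by
    calc Real.exp (-b * (T-1)) ≤ Real.exp (-1 + -Real.log C) := by
          apply Real.exp_le_exp.mpr; linarith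
      _ = Real.exp (-1) / C := by
          rw [Real.exp_add, Real.exp_neg (Real.log C), Real.exp_log hCpos, div_eq_mul_inv]
  have hΔlb : -Real.exp (-1) ≤ Δ := by
    rw [hΔ]
    have : C * Real.exp (-b * (T - 1)) ≤ C * (Real.exp (-1) / C) :=
      mul_le_mul_of_nonneg_left hexp_le hCpos.le
    rw [mul_div_cancel₀ _ hCpos.ne'] at this
    nlinarith
  have hΔneg : Δ < 0 := by
    rw [hΔ]
    have := Real.exp_pos (-b * (T - 1))
    nlinarith
  have he1 : Real.exp 1 * Real.exp (-1) = 1 := by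
    rw [← Real.exp_add]; norm_num
  have hepos : (0:ℝ) < Real.exp 1 := Real.exp_pos 1
  have harg0 : 0 ≤ Real.exp 1 * Δ + 1 := by nlinarith
  have harg1 : Real.exp 1 * Δ + 1 < 1 := by nlinarith
  set s : ℝ := Real.sqrt (Real.exp 1 * Δ + 1) with hs
  have hs0 : 0 ≤ s := Real.sqrt_nonneg _
  have hs2 : s ^ 2 = Real.exp 1 * Δ + 1 := Real.sq_sqrt harg0
  have hs1 : s < 1 := by nlinarith
  clear_value s
  have hK1 : -1 ≤ K := by rw [hK]; linarith
  have hKneg : K < 0 := by rw [hK]; linarith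
  -- κ nonneg
  have hTK : 0 < T - 1 + K / b := by
    have h1 : (1 + Real.log C) / b ≤ T - 1 := by
      rw [div_le_iff₀ hb]; linarith [hbT]
    have h2 : (-1) / b ≤ K / b := (div_le_div_iff_of_pos_right hb).mpr hK1
    have h3 : (1 + Real.log C) / b + (-1) / b = Real.log C / b := by ring
    have := div_pos hlogC hb
    linarith
  refine ⟨hΔlb, hΔneg, Int.ceil_nonneg hTK.le, ?_⟩
  set κ : ℝ := ((⌈T - 1 + K / b⌉ : ℤ) : ℝ) with hκ
  have hκge : T - 1 + K / b ≤ κ := Int.le_ceil _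
  clear_value κ
  have hr1 : Real.exp (-b) < 1 := by
    rw [Real.exp_lt_one_iff]; linarith
  have hr0 : (0:ℝ) ≤ Real.exp (-b) := (Real.exp_pos _).le
  -- sum value
  have hsum : (∑' k : ℕ, M * B * Real.exp (-(κ + (k:ℝ)) * b))
      = M * B * Real.exp (-κ * b) * (1 - Real.exp (-b))⁻¹ := by
    have h1 : ∀ k : ℕ, M * B * Real.exp (-(κ + (k:ℝ)) * b)
        = (M * B * Real.exp (-κ * b)) * (Real.exp (-b)) ^ k := by
      intro k
      rw [← Real.exp_nat_mul]
      rw [show M * B * Real.exp (-κ * b) * Real.exp ((k:ℝ) * -b)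
        = M * B * (Real.exp (-κ * b) * Real.exp ((k:ℝ) * -b)) from by ring, ← Real.exp_add]
      ring_nf
    simp_rw [h1]
    rw [tsum_mul_left, tsum_geometric_of_lt_one hr0 hr1, mul_assoc]
  rw [hsum]
  -- key inequality K e^K ≤ Δ
  have hΔeq : Δ = (s ^ 2 - 1) * Real.exp (-1) := by
    linear_combination (-(Real.exp (-1))) * hs2 - Δ * he1
  have hKeK : K * Real.exp K ≤ Δ := by
    have hes : s + 1 ≤ Real.exp s := Real.add_one_le_exp s
    have heK : Real.exp (s - 1) = Real.exp s * Real.exp (-1) := by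
      rw [← Real.exp_add]; ring_nf
    have hstep : (s - 1) * Real.exp s ≤ s ^ 2 - 1 := by nlinarith
    rw [hK, heK, hΔeq]
    have hene : 0 < Real.exp (-1) := Real.exp_pos _
    have h6 := mul_le_mul_of_nonneg_right hstep hene.le
    linarith [h6, mul_assoc (s-1) (Real.exp s) (Real.exp (-1))]
  -- exp(-κ b) bound
  have hκb : Real.exp (-κ * b) ≤ Real.exp (-b * (T-1)) * Real.exp (-K) := by
    rw [← Real.exp_add]
    apply Real.exp_le_exp.mpr
    have h4 : (T - 1 + K / b) * b ≤ κ * b := mul_le_mul_of_nonneg_right hκge hb.le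
    rw [add_mul, div_mul_cancel₀ K hb.ne'] at h4
    linarith [h4]
  -- 1/(1-e^{-b}) ≤ (1+b)/b
  have h1e : 0 < 1 - Real.exp (-b) := by linarith
  have hgeo : (1 - Real.exp (-b))⁻¹ ≤ (1 + b) / b := by
    have h2 : (1 + b) * Real.exp (-b) ≤ 1 := by
      rw [Real.exp_neg, mul_inv_le_iff₀ (Real.exp_pos b)]
      have := Real.add_one_le_exp b
      linarith
    rw [le_div_iff₀ hb, inv_mul_le_iff₀ h1e]
    nlinarith [h2]
  -- final comparison
  have hKK : Real.exp K * Real.exp (-K) = 1 := by rw [← Real.exp_add]; simp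
  have hfin : (-Δ) * Real.exp (-K) ≤ -K := by
    have h5 := mul_le_mul_of_nonneg_right hKeK (Real.exp_pos (-K)).le
    nlinarith [h5, hKK]
  have hMB0 : (0:ℝ) ≤ M * B := by linarith
  have step1 : M * B * Real.exp (-κ * b) * (1 - Real.exp (-b))⁻¹
      ≤ (M * B * (Real.exp (-b * (T-1)) * Real.exp (-K))) * ((1 + b) / b) :=
    mul_le_mul (mul_le_mul_of_nonneg_left hκb hMB0) hgeo (inv_nonneg.mpr h1e.le) (by positivity)
  have step2 : (M * B * (Real.exp (-b * (T-1)) * Real.exp (-K))) * ((1 + b) / b)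
      = (-Δ) * Real.exp (-K) / b := by rw [hΔ, hC]; field_simp
  have step3 : (-Δ) * Real.exp (-K) / b ≤ -K / b := (div_le_div_iff_of_pos_right hb).mpr hfin
  linarith [step1, step2, step3]
end
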